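/- Let $f:\mathbb{R}\to(0,\infty)$ be a log-concave probability density function. Then the cumulative distribution function $F(x)=\int_{-\infty}^x f(y)\,dy$ is log-concave, i.e., $\log F$ is a concave function on $\mathbb{R}$. -/

import Mathlib

open Set MeasureTheory

/-- The CDF of a positive log-concave probability density is log-concave. -/
theorem logConcave_cdf_of_logConcave_density
    (f : ℝ → ℝ) (hfmeas : Measurable f) (hfpos : ∀ x, 0 < f x)
    (hflc : ConcaveOn ℝ univ (fun x => Real.log (f x)))
    (hfint : Integrable f) (hfprob : ∫ x, f x = 1) :
    ConcaveOn ℝ univ (fun x => Real.log (∫ y in Iic x, f y)) := by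
  set g : ℝ → ℝ := fun x => Real.log (f x) with hg
  -- f is continuous
  have hgcont : Continuous g := by
    have : ConvexOn ℝ univ (fun x => -g x) := hflc.neg
    have := (this.continuousOn isOpen_univ)
    have h2 : Continuous fun x => -g x := by
      rw [← continuousOn_univ]; exact this
    exact h2.neg.congr (fun x => neg_neg _)
  have hfeq : ∀ x, f x = Real.exp (g x) := fun x => (Real.exp_log (hfpos x)).symm
  have hfcont : Continuous f := by
    have : Continuous fun x => Real.exp (g x) := Real.continuous_exp.comp hgcont
    simpa [← hfeq] using this
  set F : ℝ → ℝ := fun x => ∫ y in Iic x, f y with hF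
  -- F positive
  have hFpos : ∀ x, 0 < F x := by
    intro x
    refine (setIntegral_pos_iff_support_of_nonneg_ae ?_ (hfint.integrableOn)).2 ?_
    · exact Filter.Eventually.of_forall fun y => (hfpos y).le
    · have : Function.support f = univ := by
        ext y; simp [Function.support, (hfpos y).ne']
      rw [this]
      simp
  -- derivative of F
  have hFderiv : ∀ x, HasDerivAt F (f x) x := by
    intro x
    have key : ∀ u, F u = F 0 + ∫ t in (0:ℝ)..u, f t := by
      intro u
      simp only [hF]
      rw [← intervalIntegral.integral_Iic_sub_Iic hfint.integrableOn hfint.integrableOn]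
      ring
    have h1 : HasDerivAt (fun u => ∫ t in (0:ℝ)..u, f t) (f x) x :=
      intervalIntegral.integral_hasDerivAt_right hfint.intervalIntegrable
        (hfcont.stronglyMeasurableAtFilter _ _) hfcont.continuousAt
    have := (h1.const_add (F 0))
    simpa [← key] using this
  -- key monotonicity: f y * F x ≤ f x * F y for x ≤ y
  have hkey : ∀ x y : ℝ, x ≤ y → f y * F x ≤ f x * F y := by
    intro x y hxy
    rcases eq_or_lt_of_le hxy with rfl | hxy
    · exact le_rfl
    -- pointwise: for t ≤ x, f y * f t ≤ f x * f (t + (y - x))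
    have hpt : ∀ t ∈ Iic x, f y * f t ≤ f x * f (t + (y - x)) := by
      intro t ht
      simp only [mem_Iic] at ht
      have hty : t < y := lt_of_le_of_lt ht hxy
      set a : ℝ := (y - x) / (y - t) with ha
      set b : ℝ := (x - t) / (y - t) with hb
      have hyt : (0:ℝ) < y - t := by linarith
      have ha0 : 0 ≤ a := div_nonneg (by linarith) hyt.le
      have hb0 : 0 ≤ b := div_nonneg (by linarith) hyt.le
      have hab : a + b = 1 := by
        rw [ha, hb, ← add_div, div_eq_one_iff_eq hyt.ne']; ring
      have hx' : a • t + b • y = x := by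
        rw [smul_eq_mul, smul_eq_mul, ha, hb, div_mul_eq_mul_div, div_mul_eq_mul_div,
          ← add_div, div_eq_iff hyt.ne']
        ring
      have hz' : b • t + a • y = t + (y - x) := by
        rw [smul_eq_mul, smul_eq_mul, ha, hb, div_mul_eq_mul_div, div_mul_eq_mul_div,
          ← add_div, div_eq_iff hyt.ne']
        ring
      have h1 : a * g t + b * g y ≤ g x := by
        have := hflc.2 (mem_univ t) (mem_univ y) ha0 hb0 hab
        rwa [hx'] at this
      have h2 : b * g t + a * g y ≤ g (t + (y - x)) := by
        have := hflc.2 (mem_univ t) (mem_univ y) hb0 ha0 (by linarith)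
        rwa [hz'] at this
      have hsum : g y + g t ≤ g x + g (t + (y - x)) := by
        have h3 := add_le_add h1 h2
        have h4 : a * g t + b * g y + (b * g t + a * g y) = g t + g y := by
          have hb1 : b = 1 - a := by linarith
          rw [hb1]; ring
        linarith
      calc f y * f t = Real.exp (g y + g t) := by
            rw [Real.exp_add, ← hfeq, ← hfeq]
        _ ≤ Real.exp (g x + g (t + (y - x))) := Real.exp_le_exp.2 hsum
        _ = f x * f (t + (y - x)) := by rw [Real.exp_add, ← hfeq, ← hfeq]
    -- change of variables
    have htrans : ∫ t in Iic x, f (t + (y - x)) = F y := by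
      have hmp : MeasurePreserving (fun t : ℝ => t + (y - x)) volume volume :=
        measurePreserving_add_right volume (y - x)
      have hemb : MeasurableEmbedding (fun t : ℝ => t + (y - x)) :=
        (MeasurableEquiv.addRight (y - x)).measurableEmbedding
      have := hmp.setIntegral_preimage_emb hemb f (Iic y)
      have hpre : (fun t : ℝ => t + (y - x)) ⁻¹' Iic y = Iic x := by
        ext t
        simp only [mem_preimage, mem_Iic]
        constructor <;> intro h <;> linarith
      rw [hpre] at this
      exact this
    have hint1 : IntegrableOn (fun t => f y * f t) (Iic x) :=
      (hfint.integrableOn).const_mul _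
    have hint2 : IntegrableOn (fun t => f x * f (t + (y - x))) (Iic x) := by
      refine Integrable.const_mul ?_ _
      have : Integrable (fun t => f (t + (y - x))) := by
        have hmp : MeasurePreserving (fun t : ℝ => t + (y - x)) volume volume :=
          measurePreserving_add_right volume (y - x)
        exact (hmp.integrable_comp_emb
          ((MeasurableEquiv.addRight (y - x)).measurableEmbedding)).2 hfint
      exact this.integrableOn
    calc f y * F x = ∫ t in Iic x, f y * f t := by
          rw [hF]; exact (integral_const_mul _ _).symm
      _ ≤ ∫ t in Iic x, f x * f (t + (y - x)) :=
          setIntegral_mono_on hint1 hint2 measurableSet_Iic hpt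
      _ = f x * ∫ t in Iic x, f (t + (y - x)) := integral_const_mul _ _
      _ = f x * F y := by rw [htrans]
  -- log F has derivative f/F
  have hlogderiv : ∀ x, HasDerivAt (fun u => Real.log (F u)) (f x / F x) x := by
    intro x
    exact (hFderiv x).log (hFpos x).ne'
  have hdiff : Differentiable ℝ (fun u => Real.log (F u)) :=
    fun x => (hlogderiv x).differentiableAt
  have hderiv_eq : ∀ x, deriv (fun u => Real.log (F u)) x = f x / F x :=
    fun x => (hlogderiv x).deriv
  have hanti : Antitone (deriv (fun u => Real.log (F u))) := by
    intro x y hxy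
    rw [hderiv_eq, hderiv_eq]
    rw [div_le_div_iff₀ (hFpos y) (hFpos x)]
    exact hkey x y hxy
  exact Antitone.concaveOn_univ_of_deriv hdiff hanti
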